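/- If (t,u) ∈ ℂ² satisfies u⁴ = t²(t−1) with t ≠ 0, and (t', u') = ((t−2)²/t², (1+i)u(2−t)/t²), then u'⁴ = t'²(t'−1). In particular the map (t,u) ↦ (t',u') sends the affine curve u⁴ = t²(t−1) minus {t=0} into itself. -/

import Mathlib

open Complex

/-- The (1+i)-multiplication map preserves the curve u⁴ = t²(t-1). -/
theorem curve_one_add_i_mult (t u : ℂ) (h : u^4 = t^2 * (t - 1)) (ht : t ≠ 0) :
    ((1 + Complex.I) * u * (2 - t) / t^2)^4 =
      ((t - 2)^2 / t^2)^2 * ((t - 2)^2 / t^2 - 1) := by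
  have hI : (1 + Complex.I)^4 = -4 := by
    have h2 := Complex.I_sq
    ring_nf
    rw [show (Complex.I)^3 = I^2*I by ring, show (Complex.I)^4 = I^2*I^2 by ring, h2]
    ring
  field_simp
  rw [hI, h]
  ring
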